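/- Let C be the set of affine functions F_2^4 → F_2 (functions v ↦ ℓ(v) + c with ℓ: F_2^4 → F_2 linear and c ∈ F_2), regarded as the first-order Reed–Muller code RM(1,4) with coordinates indexed by F_2^4. A permutation σ of F_2^4 satisfies {f ∘ σ : f ∈ C} = C if and only if σ is an affine transformation, i.e., σ(v) = A(v) + b for some invertible linear map A on F_2^4 and some b ∈ F_2^4. Consequently, the automorphism group of RM(1,4) is isomorphic to the semidirect product F_2^4 ⋊ GL(4, F_2). -/

import Mathlib

/-- `F₂⁴`, identified with the set of coordinate positions of `RM(1,4)`. -/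
abbrev V4 : Type := Fin 4 → ZMod 2

/-- The first-order Reed–Muller code `RM(1,4)`, with coordinates indexed by
`F₂⁴`: the set of evaluation vectors of affine functions `F₂⁴ → F₂`, i.e.
functions `v ↦ ℓ(v) + c` with `ℓ` linear and `c` constant. -/
def rmCode : Set (V4 → ZMod 2) :=
  {f | ∃ (ℓ : V4 →ₗ[ZMod 2] ZMod 2) (c : ZMod 2), f = fun v => ℓ v + c}

/-- The automorphism group of `RM(1,4)`: the group of permutations `σ` of the
coordinate positions such that `{f ∘ σ : f ∈ C} = C`. -/
def autRM : Subgroup (Equiv.Perm V4) where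
  carrier := {σ | (fun f => f ∘ ⇑σ) '' rmCode = rmCode}
  one_mem' := by
    show (fun f : V4 → ZMod 2 => f ∘ ⇑(1 : Equiv.Perm V4)) '' rmCode = rmCode
    have h : (fun f : V4 → ZMod 2 => f ∘ ⇑(1 : Equiv.Perm V4)) = id := by
      funext f; rfl
    rw [h, Set.image_id]
  mul_mem' := by
    intro a b ha hb
    show (fun f : V4 → ZMod 2 => f ∘ ⇑(a * b)) '' rmCode = rmCode
    have h : (fun f : V4 → ZMod 2 => f ∘ ⇑(a * b)) =
        (fun f : V4 → ZMod 2 => f ∘ ⇑b) ∘ fun f : V4 → ZMod 2 => f ∘ ⇑a := by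
      funext f; rfl
    rw [h, Set.image_comp, ha, hb]
  inv_mem' := by
    intro a ha
    show (fun f : V4 → ZMod 2 => f ∘ ⇑a⁻¹) '' rmCode = rmCode
    conv_lhs => rw [← ha]
    rw [← Set.image_comp]
    have h : ((fun f : V4 → ZMod 2 => f ∘ ⇑a⁻¹) ∘ fun f : V4 → ZMod 2 => f ∘ ⇑a)
        = id := by
      funext f
      funext v
      simp
    rw [h, Set.image_id]

/-- The natural action of `GL(4, F₂)` (the group of invertible linear maps on
`F₂⁴`) on the (multiplicatively written) translation group `F₂⁴`. -/
def phiRM : (V4 ≃ₗ[ZMod 2] V4) →* MulAut (Multiplicative V4) where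
  toFun A := AddEquiv.toMultiplicative A.toAddEquiv
  map_one' := by ext x; rfl
  map_mul' A B := by ext x; rfl

lemma zmod2_add_self : ∀ y : ZMod 2, y + y = 0 := by decide

lemma v4_add_self (x : V4) : x + x = 0 := funext fun i => zmod2_add_self (x i)

lemma comp_mem_rmCode (σ : V4 → V4) (A : V4 ≃ₗ[ZMod 2] V4) (b : V4)
    (h : ∀ v, σ v = A v + b) {f : V4 → ZMod 2} (hf : f ∈ rmCode) :
    f ∘ σ ∈ rmCode := by
  obtain ⟨ℓ, c, rfl⟩ := hf
  refine ⟨ℓ.comp A.toLinearMap, ℓ b + c, ?_⟩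
  funext v
  simp only [Function.comp_apply, h v, map_add, LinearMap.comp_apply,
    LinearEquiv.coe_coe]
  ring

lemma autRM_iff (σ : Equiv.Perm V4) :
    (fun f => f ∘ ⇑σ) '' rmCode = rmCode ↔
      ∃ (A : V4 ≃ₗ[ZMod 2] V4) (b : V4), ∀ v, σ v = A v + b := by
  constructor
  · intro hσ
    set b := σ 0 with hb
    have hsub : ∀ f ∈ rmCode, f ∘ ⇑σ ∈ rmCode := by
      intro f hf
      rw [← hσ]
      exact ⟨f, hf, rfl⟩
    have key : ∀ (ℓ : V4 →ₗ[ZMod 2] ZMod 2) (u w : V4),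
        ℓ (σ (u + w) + b) = ℓ (σ u + b) + ℓ (σ w + b) := by
      intro ℓ u w
      have hmem : (fun v => ℓ v + 0) ∘ ⇑σ ∈ rmCode := hsub _ ⟨ℓ, 0, rfl⟩
      obtain ⟨ℓ', c, hc⟩ := hmem
      have hval : ∀ v, ℓ (σ v) = ℓ' v + c := by
        intro v
        have := congrFun hc v
        simpa using this
      have hbv : ℓ b = c := by rw [hb, hval 0]; simp
      have e : ∀ v, ℓ (σ v + b) = ℓ' v := by
        intro v
        rw [map_add, hval, hbv]
        linear_combination zmod2_add_self c
      rw [e, e, e, map_add]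
    have hadd : ∀ u w, σ (u + w) + b = (σ u + b) + (σ w + b) := by
      intro u w
      funext i
      simpa using key (LinearMap.proj i) u w
    let T : V4 →+ V4 :=
      { toFun := fun v => σ v + b
        map_zero' := by show σ 0 + b = 0; rw [hb]; exact v4_add_self _
        map_add' := hadd }
    have hsmul : ∀ (c : ZMod 2) (x : V4), T (c • x) = c • T x := by
      intro c x
      fin_cases c
      · change T ((0 : ZMod 2) • x) = (0 : ZMod 2) • T x
        simp
      · change T ((1 : ZMod 2) • x) = (1 : ZMod 2) • T x
        simp
    let Tlin : V4 →ₗ[ZMod 2] V4 :=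
      { toFun := T, map_add' := hadd, map_smul' := hsmul }
    have hbij : Function.Bijective Tlin := by
      constructor
      · intro x y hxy
        apply σ.injective
        have : σ x + b = σ y + b := hxy
        exact add_right_cancel this
      · intro y
        refine ⟨σ.symm (y + b), ?_⟩
        show σ (σ.symm (y + b)) + b = y
        rw [Equiv.apply_symm_apply, add_assoc, v4_add_self, add_zero]
    refine ⟨LinearEquiv.ofBijective Tlin hbij, b, fun v => ?_⟩
    have : (LinearEquiv.ofBijective Tlin hbij) v = σ v + b := rfl
    rw [this, add_assoc, v4_add_self, add_zero]
  · rintro ⟨A, b, h⟩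
    apply Set.Subset.antisymm
    · rintro g ⟨f, hf, rfl⟩
      exact comp_mem_rmCode σ A b h hf
    · intro g hg
      have hinv : ∀ w, σ.symm w = A.symm w + A.symm b := by
        intro w
        apply σ.injective
        rw [Equiv.apply_symm_apply, h, map_add, LinearEquiv.apply_symm_apply,
          LinearEquiv.apply_symm_apply, add_assoc, v4_add_self, add_zero]
      refine ⟨g ∘ ⇑σ.symm, comp_mem_rmCode _ A.symm (A.symm b) hinv hg, ?_⟩
      funext v
      simp

/-- The homomorphism from the semidirect product to permutations. -/
def sdpToPerm : Multiplicative V4 ⋊[phiRM] (V4 ≃ₗ[ZMod 2] V4) →* Equiv.Perm V4 where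
  toFun p := p.right.toEquiv.trans (Equiv.addRight (Multiplicative.toAdd p.left))
  map_one' := by
    apply Equiv.ext; intro v
    show (1 : V4 ≃ₗ[ZMod 2] V4) v + Multiplicative.toAdd (1 : Multiplicative V4) = v
    simp
  map_mul' p q := by
    apply Equiv.ext; intro v
    show (p * q).right v + Multiplicative.toAdd ((p * q).left)
        = p.right (q.right v + Multiplicative.toAdd q.left) + Multiplicative.toAdd p.left
    have h1 : Multiplicative.toAdd ((p * q).left)
        = Multiplicative.toAdd p.left + p.right (Multiplicative.toAdd q.left) := rfl
    have h2 : (p * q).right v = p.right (q.right v) := rfl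
    rw [h1, h2, map_add]
    abel

theorem autRM_affine_and_semidirect :
    (∀ σ : Equiv.Perm V4,
      (fun f => f ∘ ⇑σ) '' rmCode = rmCode ↔
        ∃ (A : V4 ≃ₗ[ZMod 2] V4) (b : V4), ∀ v, σ v = A v + b) ∧
    Nonempty (autRM ≃* Multiplicative V4 ⋊[phiRM] (V4 ≃ₗ[ZMod 2] V4)) := by
  refine ⟨autRM_iff, ⟨?_⟩⟩
  have hmem : ∀ p, sdpToPerm p ∈ autRM := by
    intro p
    refine (autRM_iff _).2 ⟨p.right, Multiplicative.toAdd p.left, fun v => rfl⟩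
  let Φ : (Multiplicative V4 ⋊[phiRM] (V4 ≃ₗ[ZMod 2] V4)) →* autRM :=
    sdpToPerm.codRestrict autRM hmem
  have hbij : Function.Bijective Φ := by
    constructor
    · intro p q hpq
      have hfun : ∀ v, sdpToPerm p v = sdpToPerm q v := by
        intro v
        exact congrFun (congrArg (fun (x : autRM) => ((x : Equiv.Perm V4) : V4 → V4)) hpq) v
      have hb : Multiplicative.toAdd p.left = Multiplicative.toAdd q.left := by
        have h0 := hfun 0
        simp only [sdpToPerm, MonoidHom.coe_mk, OneHom.coe_mk, Equiv.trans_apply,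
          Equiv.coe_addRight, LinearEquiv.coe_toEquiv, map_zero, zero_add] at h0
        exact h0
      have hA : p.right = q.right := by
        apply LinearEquiv.toLinearMap_injective
        apply LinearMap.ext
        intro v
        have hv := hfun v
        simp only [sdpToPerm, MonoidHom.coe_mk, OneHom.coe_mk, Equiv.trans_apply,
          Equiv.coe_addRight, LinearEquiv.coe_toEquiv] at hv
        rw [hb] at hv
        exact add_right_cancel hv
      ext
      · exact congrFun hb _
      · rw [hA]
    · rintro ⟨σ, hσ⟩
      obtain ⟨A, b, h⟩ := (autRM_iff σ).1 hσ
      refine ⟨⟨Multiplicative.ofAdd b, A⟩, ?_⟩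
      apply Subtype.ext
      apply Equiv.ext
      intro v
      exact (h v).symm
  exact (MulEquiv.ofBijective Φ hbij).symm
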